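/- Let d ≥ 1 be an integer, let Δ_1, …, Δ_d be nonnegative reals with ∑_{j=1}^{d} Δ_j ≤ E, and let c > 0 be a real. Then the number of indices j ∈ {1,…,d} for which there exists an integer b with j ≤ b ≤ d and ∑_{i=j}^{b} Δ_i > c·(b − j + 1) is at most E/c. -/
import Mathlib


/-- **One-sided covering/counting argument**: if `Δ₁, …, Δ_d ≥ 0` sum to at
most `E`, then the number of indices `j ∈ {1,…,d}` admitting a right witness
interval `[j, b] ⊆ [1, d]` with `∑_{i=j}^{b} Δᵢ > c·(b − j + 1)` is at most
`E / c`. -/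
theorem right_witness_covering (d : ℕ) (hd : 1 ≤ d)
    (Δ : ℕ → ℝ) (hΔ : ∀ j ∈ Finset.Icc 1 d, 0 ≤ Δ j)
    (E : ℝ) (hsum : ∑ j ∈ Finset.Icc 1 d, Δ j ≤ E)
    (c : ℝ) (hc : 0 < c) :
    (({j | j ∈ Finset.Icc 1 d ∧ ∃ b : ℕ, j ≤ b ∧ b ≤ d ∧
        c * ((b : ℝ) - j + 1) < ∑ i ∈ Finset.Icc j b, Δ i}.ncard : ℝ)) ≤ E / c := by
  classical
  set P : ℕ → Prop := fun j => ∃ b : ℕ, j ≤ b ∧ b ≤ d ∧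
      c * ((b : ℝ) - j + 1) < ∑ i ∈ Finset.Icc j b, Δ i with hP
  set B : Finset ℕ := (Finset.Icc 1 d).filter P with hBdef
  have hBsub : ∀ j ∈ B, 1 ≤ j ∧ j ≤ d := by
    intro j hj
    simp only [hBdef, Finset.mem_filter, Finset.mem_Icc] at hj
    exact ⟨hj.1.1, hj.1.2⟩
  have key : ∀ n a : ℕ, 1 ≤ a → d + 1 - a ≤ n →
      c * (((B.filter (fun j => a ≤ j)).card : ℝ)) ≤ ∑ i ∈ Finset.Icc a d, Δ i := by
    intro n
    induction n with
    | zero =>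
      intro a ha hn
      have had : d < a := by omega
      have h1 : B.filter (fun j => a ≤ j) = ∅ := by
        apply Finset.filter_eq_empty_iff.mpr
        intro j hj hja
        exact absurd (hBsub j hj).2 (by omega)
      have h2 : Finset.Icc a d = ∅ := by
        rw [Finset.Icc_eq_empty_iff]; omega
      rw [h1, h2]; simp
    | succ n ih =>
      intro a ha hn
      by_cases hne : (B.filter (fun j => a ≤ j)).Nonempty
      · set j := (B.filter (fun j => a ≤ j)).min' hne with hjdef
        have hjmem := (B.filter (fun j => a ≤ j)).min'_mem hne
        rw [Finset.mem_filter] at hjmem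
        obtain ⟨hjB, haj⟩ := hjmem
        have hjmin : ∀ j' ∈ B, a ≤ j' → j ≤ j' := by
          intro j' hj' ha'
          exact Finset.min'_le _ _ (Finset.mem_filter.mpr ⟨hj', ha'⟩)
        obtain ⟨hj1, hjd⟩ := hBsub j hjB
        have hPj : P j := (Finset.mem_filter.mp hjB).2
        obtain ⟨b, hjb, hbd, hwit⟩ := hPj
        -- cover: B.filter (a ≤ ·) ⊆ Icc j b ∪ B.filter (b+1 ≤ ·)
        have hcover : B.filter (fun j' => a ≤ j') ⊆
            Finset.Icc j b ∪ B.filter (fun j' => b + 1 ≤ j') := by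
          intro x hx
          rw [Finset.mem_filter] at hx
          obtain ⟨hxB, hax⟩ := hx
          have hjx := hjmin x hxB hax
          rcases le_or_gt x b with h | h
          · exact Finset.mem_union_left _ (Finset.mem_Icc.mpr ⟨hjx, h⟩)
          · exact Finset.mem_union_right _ (Finset.mem_filter.mpr ⟨hxB, by omega⟩)
        have hcard : ((B.filter (fun j' => a ≤ j')).card : ℝ) ≤
            ((b - j + 1 : ℕ) : ℝ) + ((B.filter (fun j' => b + 1 ≤ j')).card : ℝ) := by
          have h1 := Finset.card_le_card hcover
          have h2 := Finset.card_union_le (Finset.Icc j b) (B.filter (fun j' => b + 1 ≤ j'))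
          have h3 : (Finset.Icc j b).card = b - j + 1 := by
            rw [Nat.card_Icc]; omega
          have := h1.trans h2
          rw [h3] at this
          push_cast
          exact_mod_cast this
        have hih : c * ((B.filter (fun j' => b + 1 ≤ j')).card : ℝ) ≤
            ∑ i ∈ Finset.Icc (b + 1) d, Δ i := by
          apply ih (b + 1) (by omega) (by omega)
        have hcast : ((b - j + 1 : ℕ) : ℝ) = (b : ℝ) - j + 1 := by
          rw [Nat.cast_add, Nat.cast_sub hjb, Nat.cast_one]
        -- combine
        have hsplit : ∑ i ∈ Finset.Icc j b, Δ i + ∑ i ∈ Finset.Icc (b + 1) d, Δ i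
            ≤ ∑ i ∈ Finset.Icc a d, Δ i := by
          have hdisj : Disjoint (Finset.Icc j b) (Finset.Icc (b + 1) d) := by
            rw [Finset.disjoint_left]
            intro x hx hx'
            rw [Finset.mem_Icc] at hx hx'
            omega
          rw [← Finset.sum_union hdisj]
          apply Finset.sum_le_sum_of_subset_of_nonneg
          · intro x hx
            rw [Finset.mem_union, Finset.mem_Icc, Finset.mem_Icc] at hx
            rw [Finset.mem_Icc]
            omega
          · intro x hx _
            rw [Finset.mem_Icc] at hx
            exact hΔ x (Finset.mem_Icc.mpr ⟨by omega, hx.2⟩)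
        calc c * ((B.filter (fun j' => a ≤ j')).card : ℝ)
            ≤ c * (((b - j + 1 : ℕ) : ℝ) + ((B.filter (fun j' => b + 1 ≤ j')).card : ℝ)) := by
              exact mul_le_mul_of_nonneg_left hcard hc.le
          _ = c * ((b : ℝ) - j + 1) + c * ((B.filter (fun j' => b + 1 ≤ j')).card : ℝ) := by
              rw [hcast]; ring
          _ ≤ ∑ i ∈ Finset.Icc j b, Δ i + ∑ i ∈ Finset.Icc (b + 1) d, Δ i := by
              exact add_le_add hwit.le hih
          _ ≤ ∑ i ∈ Finset.Icc a d, Δ i := hsplit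
      · rw [Finset.not_nonempty_iff_eq_empty] at hne
        rw [hne]
        simp only [Finset.card_empty, Nat.cast_zero, mul_zero]
        apply Finset.sum_nonneg
        intro i hi
        rw [Finset.mem_Icc] at hi
        exact hΔ i (Finset.mem_Icc.mpr ⟨by omega, hi.2⟩)
  have hset : {j | j ∈ Finset.Icc 1 d ∧ P j} = (B : Set ℕ) := by
    ext x
    simp [hBdef]
  have hncard : ({j | j ∈ Finset.Icc 1 d ∧ P j}.ncard : ℝ) = (B.card : ℝ) := by
    rw [hset, Set.ncard_coe_finset]
  have hfull : B.filter (fun j => 1 ≤ j) = B := by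
    apply Finset.filter_true_of_mem
    intro j hj
    exact (hBsub j hj).1
  have hmain : c * (B.card : ℝ) ≤ E := by
    have := key d 1 le_rfl (by omega)
    rw [hfull] at this
    exact this.trans hsum
  rw [le_div_iff₀ hc]
  calc ({j | j ∈ Finset.Icc 1 d ∧ P j}.ncard : ℝ) * c = c * (B.card : ℝ) := by
        rw [hncard]; ring
    _ ≤ E := hmain
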